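/- arXiv:2503.10932 — 2 statements merged into one kernel-verified Lean document; each statement's English description precedes it below -/
import Mathlib

section
/- Let N₁, N₂ be nonnegative integers and let δ₂ be a symmetric treatment rule (δ₂(n₁,n₂) + δ₂(N₁-n₁, N₂-n₂) = 1 for all valid n₁,n₂). If the mean vector (μ₁,μ₂) ∈ [0,1]² maximizes the regret function R(δ,·) over [0,1]², then (1-μ₁, 1-μ₂) also maximizes R(δ,·). -/
/-- Expected probability of assigning treatment 2 under rule `δ₂`. -/
noncomputable def expDelta (N₁ N₂ : ℕ) (δ₂ : ℕ → ℕ → ℝ) (μ₁ μ₂ : ℝ) : ℝ :=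
  ∑ n₁ ∈ Finset.range (N₁ + 1), ∑ n₂ ∈ Finset.range (N₂ + 1),
    δ₂ n₁ n₂ * (N₁.choose n₁ : ℝ) * μ₁ ^ n₁ * (1 - μ₁) ^ (N₁ - n₁) *
      (N₂.choose n₂ : ℝ) * μ₂ ^ n₂ * (1 - μ₂) ^ (N₂ - n₂)

/-- Regret of the rule `δ₂` at the mean vector `(μ₁, μ₂)`. -/
noncomputable def regret2 (N₁ N₂ : ℕ) (δ₂ : ℕ → ℕ → ℝ) (μ₁ μ₂ : ℝ) : ℝ :=
  max μ₁ μ₂ - μ₁ * (1 - expDelta N₁ N₂ δ₂ μ₁ μ₂) - μ₂ * expDelta N₁ N₂ δ₂ μ₁ μ₂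

lemma binom_sum (N : ℕ) (μ : ℝ) :
    ∑ n ∈ Finset.range (N + 1), (N.choose n : ℝ) * μ ^ n * (1 - μ) ^ (N - n) = 1 := by
  have h := add_pow μ (1 - μ) N
  have h1 : (μ + (1 - μ)) ^ N = 1 := by ring_nf
  rw [h1] at h
  conv_rhs => rw [h]
  apply Finset.sum_congr rfl
  intro n _
  ring

lemma expDelta_flip (N₁ N₂ : ℕ) (δ₂ : ℕ → ℕ → ℝ)
    (hsym : ∀ n₁ ≤ N₁, ∀ n₂ ≤ N₂, δ₂ n₁ n₂ + δ₂ (N₁ - n₁) (N₂ - n₂) = 1)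
    (μ₁ μ₂ : ℝ) :
    expDelta N₁ N₂ δ₂ (1 - μ₁) (1 - μ₂) = 1 - expDelta N₁ N₂ δ₂ μ₁ μ₂ := by
  unfold expDelta
  rw [← Finset.sum_range_reflect]
  have key : ∀ n₁ ∈ Finset.range (N₁ + 1),
      (∑ n₂ ∈ Finset.range (N₂ + 1),
        δ₂ (N₁ + 1 - 1 - n₁) n₂ * (N₁.choose (N₁ + 1 - 1 - n₁) : ℝ) * (1 - μ₁) ^ (N₁ + 1 - 1 - n₁)
          * (1 - (1 - μ₁)) ^ (N₁ - (N₁ + 1 - 1 - n₁)) * (N₂.choose n₂ : ℝ) * (1 - μ₂) ^ n₂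
          * (1 - (1 - μ₂)) ^ (N₂ - n₂))
      = ∑ n₂ ∈ Finset.range (N₂ + 1),
        (1 - δ₂ n₁ n₂) * (N₁.choose n₁ : ℝ) * μ₁ ^ n₁ * (1 - μ₁) ^ (N₁ - n₁)
          * (N₂.choose n₂ : ℝ) * μ₂ ^ n₂ * (1 - μ₂) ^ (N₂ - n₂) := by
    intro n₁ hn₁
    rw [← Finset.sum_range_reflect]
    apply Finset.sum_congr rfl
    intro n₂ hn₂
    rw [Finset.mem_range] at hn₁ hn₂
    have hle₁ : n₁ ≤ N₁ := Nat.lt_succ_iff.mp hn₁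
    have hle₂ : n₂ ≤ N₂ := Nat.lt_succ_iff.mp hn₂
    have e1 : N₁ + 1 - 1 - n₁ = N₁ - n₁ := by omega
    have e2 : N₂ + 1 - 1 - n₂ = N₂ - n₂ := by omega
    have e3 : N₁ - (N₁ - n₁) = n₁ := by omega
    have e4 : N₂ - (N₂ - n₂) = n₂ := by omega
    have hδ : δ₂ (N₁ - n₁) (N₂ - n₂) = 1 - δ₂ n₁ n₂ := by
      have := hsym n₁ hle₁ n₂ hle₂; linarith
    rw [e1, e2, e3, e4, hδ, Nat.choose_symm hle₁, Nat.choose_symm hle₂]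
    ring
  rw [Finset.sum_congr rfl key]
  have expand : ∀ n₁ ∈ Finset.range (N₁ + 1),
      (∑ n₂ ∈ Finset.range (N₂ + 1),
        (1 - δ₂ n₁ n₂) * (N₁.choose n₁ : ℝ) * μ₁ ^ n₁ * (1 - μ₁) ^ (N₁ - n₁)
          * (N₂.choose n₂ : ℝ) * μ₂ ^ n₂ * (1 - μ₂) ^ (N₂ - n₂))
      = ((N₁.choose n₁ : ℝ) * μ₁ ^ n₁ * (1 - μ₁) ^ (N₁ - n₁)) *
          (∑ n₂ ∈ Finset.range (N₂ + 1), (N₂.choose n₂ : ℝ) * μ₂ ^ n₂ * (1 - μ₂) ^ (N₂ - n₂))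
        - ∑ n₂ ∈ Finset.range (N₂ + 1),
            δ₂ n₁ n₂ * (N₁.choose n₁ : ℝ) * μ₁ ^ n₁ * (1 - μ₁) ^ (N₁ - n₁)
              * (N₂.choose n₂ : ℝ) * μ₂ ^ n₂ * (1 - μ₂) ^ (N₂ - n₂) := by
    intro n₁ _
    rw [Finset.mul_sum, ← Finset.sum_sub_distrib]
    apply Finset.sum_congr rfl
    intro n₂ _
    ring
  rw [Finset.sum_congr rfl expand, Finset.sum_sub_distrib, binom_sum, ← Finset.sum_mul,
    binom_sum]
  ring

lemma regret2_flip (N₁ N₂ : ℕ) (δ₂ : ℕ → ℕ → ℝ)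
    (hsym : ∀ n₁ ≤ N₁, ∀ n₂ ≤ N₂, δ₂ n₁ n₂ + δ₂ (N₁ - n₁) (N₂ - n₂) = 1)
    (μ₁ μ₂ : ℝ) :
    regret2 N₁ N₂ δ₂ (1 - μ₁) (1 - μ₂) = regret2 N₁ N₂ δ₂ μ₁ μ₂ := by
  unfold regret2
  rw [expDelta_flip N₁ N₂ δ₂ hsym]
  rcases le_total μ₁ μ₂ with h | h
  · rw [max_eq_right h, max_eq_left (by linarith : (1:ℝ) - μ₂ ≤ 1 - μ₁)]
    ring
  · rw [max_eq_left h, max_eq_right (by linarith : (1:ℝ) - μ₁ ≤ 1 - μ₂)]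
    ring

/-- for a symmetric rule, if `(μ₁,μ₂)` maximizes regret over `[0,1]²`,
then so does `(1-μ₁, 1-μ₂)`. -/
theorem stmt4 (N₁ N₂ : ℕ) (δ₂ : ℕ → ℕ → ℝ)
    (hrange : ∀ n₁ ≤ N₁, ∀ n₂ ≤ N₂, δ₂ n₁ n₂ ∈ Set.Icc (0:ℝ) 1)
    (hsym : ∀ n₁ ≤ N₁, ∀ n₂ ≤ N₂, δ₂ n₁ n₂ + δ₂ (N₁ - n₁) (N₂ - n₂) = 1)
    (μ₁ μ₂ : ℝ) (h₁ : μ₁ ∈ Set.Icc (0:ℝ) 1) (h₂ : μ₂ ∈ Set.Icc (0:ℝ) 1)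
    (hmax : ∀ ν₁ ∈ Set.Icc (0:ℝ) 1, ∀ ν₂ ∈ Set.Icc (0:ℝ) 1,
      regret2 N₁ N₂ δ₂ ν₁ ν₂ ≤ regret2 N₁ N₂ δ₂ μ₁ μ₂) :
    ∀ ν₁ ∈ Set.Icc (0:ℝ) 1, ∀ ν₂ ∈ Set.Icc (0:ℝ) 1,
      regret2 N₁ N₂ δ₂ ν₁ ν₂ ≤ regret2 N₁ N₂ δ₂ (1 - μ₁) (1 - μ₂) := by
  intro ν₁ hν₁ ν₂ hν₂
  rw [regret2_flip N₁ N₂ δ₂ hsym]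
  exact hmax ν₁ hν₁ ν₂ hν₂
end

section
/- If δ_ε is an ε-approximate minimax regret rule for the binary-outcome problem (S = {0,1}^T, mean restriction M), i.e., max_{μ∈M} R(δ_ε, μ) ≤ inf_δ max_{μ∈M} R(δ, μ) + ε, then the coarsened rule δ_ε^C is an ε-approximate minimax regret rule for the problem with outcomes in [0,1]^T and the same mean restriction: max_{s : μ(s)∈M} R(δ_ε^C, s) ≤ inf_δ max_{s : μ(s)∈M} R(δ, s) + ε. -/
open MeasureTheory

/-- The coarsened rule: apply the binary-sample rule `δb` to independent Bernoulli(`w i`)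
coarsenings of the `[0,1]`-valued observations `w`. -/
noncomputable def coarsen {ι : Type*} [Fintype ι] [DecidableEq ι] {T : ℕ}
    (δb : (ι → Bool) → Fin T → ℝ) (w : ι → ℝ) (t : Fin T) : ℝ :=
  ∑ b : ι → Bool, (∏ i, if b i then w i else 1 - w i) * δb b t

/-- Expected probability that the binary-sample rule `δb` assigns treatment `t`, when
observation `i` is Bernoulli with mean `μ (τ i)`. -/
noncomputable def binExp {ι : Type*} [Fintype ι] [DecidableEq ι] {T : ℕ}
    (τ : ι → Fin T) (δb : (ι → Bool) → Fin T → ℝ) (μ : Fin T → ℝ) (t : Fin T) : ℝ :=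
  ∑ b : ι → Bool, (∏ i, if b i then μ (τ i) else 1 - μ (τ i)) * δb b t

/-- Regret of a binary-sample rule at the mean vector `μ` (binary-outcome problem). -/
noncomputable def binRegret {ι : Type*} [Fintype ι] [DecidableEq ι] {T : ℕ}
    (τ : ι → Fin T) (δb : (ι → Bool) → Fin T → ℝ) (μ : Fin T → ℝ) : ℝ :=
  (⨆ t, μ t) - ∑ t, μ t * binExp τ δb μ t

/-- Mean vector of a state. -/
noncomputable def stateMean {T : ℕ} (s : Fin T → Measure ℝ) (t : Fin T) : ℝ :=
  ∫ x, x ∂ s t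

/-- Regret of a rule for `[0,1]`-valued outcomes at state `s`, under fixed assignment `τ`. -/
noncomputable def contRegret {ι : Type*} [Fintype ι] {T : ℕ}
    (τ : ι → Fin T) (δ : (ι → ℝ) → Fin T → ℝ) (s : Fin T → Measure ℝ) : ℝ :=
  (⨆ t, stateMean s t) - ∑ t, stateMean s t * ∫ w, δ w t ∂ (Measure.pi fun i => s (τ i))

/-- A valid (possibly randomized, measurable) rule for the `[0,1]`-outcome problem. -/
def IsRuleC {ι : Type*} {T : ℕ} (δ : (ι → ℝ) → Fin T → ℝ) : Prop :=
  (∀ t, Measurable fun w => δ w t) ∧ (∀ w t, 0 ≤ δ w t) ∧ ∀ w, ∑ t, δ w t = 1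

/-- A valid rule for the binary-outcome problem. -/
def IsRuleB {ι : Type*} {T : ℕ} (δb : (ι → Bool) → Fin T → ℝ) : Prop :=
  (∀ b t, 0 ≤ δb b t) ∧ ∀ b, ∑ t, δb b t = 1

/-- An admissible state: each marginal is a probability distribution on `[0,1]`, with mean
vector in `M`. -/
def IsState {T : ℕ} (M : Set (Fin T → ℝ)) (s : Fin T → Measure ℝ) : Prop :=
  (∀ t, IsProbabilityMeasure (s t)) ∧ (∀ t, s t (Set.Icc (0:ℝ) 1) = 1) ∧ stateMean s ∈ M

section AuxPi

theorem aux_integral_pi_prod {ι : Type*} [Fintype ι] (μ : ι → Measure ℝ)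
    [h : ∀ i, SigmaFinite (μ i)] (f : ι → ℝ → ℝ) :
    ∫ x : ι → ℝ, ∏ i, f i (x i) ∂(Measure.pi μ) = ∏ i, ∫ x, f i x ∂(μ i) :=
  MeasureTheory.integral_fintype_prod_eq_prod (E := fun _ => ℝ) f (μ := μ)

theorem aux_integrable_pi_prod {ι : Type*} [Fintype ι] (μ : ι → Measure ℝ)
    [h : ∀ i, SigmaFinite (μ i)] {f : ι → ℝ → ℝ} (hf : ∀ i, Integrable (f i) (μ i)) :
    Integrable (fun x : ι → ℝ => ∏ i, f i (x i)) (Measure.pi μ) :=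
  MeasureTheory.Integrable.fintype_prod_dep (E := fun _ => ℝ) (μ := μ) hf

theorem aux_ae_Icc (ν : Measure ℝ) [IsProbabilityMeasure ν] (h : ν (Set.Icc (0:ℝ) 1) = 1) :
    ∀ᵐ x ∂ν, x ∈ Set.Icc (0:ℝ) 1 := by
  rw [ae_iff]
  have h2 := measure_compl (measurableSet_Icc (a := (0:ℝ)) (b := 1))
    (by rw [h]; exact ENNReal.one_ne_top)
  rw [h, measure_univ, tsub_self] at h2
  exact h2

theorem aux_integrable_id (ν : Measure ℝ) [IsProbabilityMeasure ν]
    (h : ν (Set.Icc (0:ℝ) 1) = 1) : Integrable (fun x : ℝ => x) ν := by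
  refine Integrable.mono' (integrable_const 1) measurable_id.aestronglyMeasurable ?_
  filter_upwards [aux_ae_Icc ν h] with x hx
  rw [Real.norm_eq_abs, abs_le]
  exact ⟨by linarith [hx.1], hx.2⟩

end AuxPi


noncomputable def bstate {T : ℕ} (μ : Fin T → ℝ) (t : Fin T) : Measure ℝ :=
  ENNReal.ofReal (μ t) • Measure.dirac 1 + ENNReal.ofReal (1 - μ t) • Measure.dirac 0

noncomputable def bern (p : ℝ) : Measure Bool :=
  ENNReal.ofReal p • Measure.dirac true + ENNReal.ofReal (1 - p) • Measure.dirac false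

theorem aux_ofReal_add {p : ℝ} (hp : p ∈ Set.Icc (0:ℝ) 1) :
    ENNReal.ofReal p + ENNReal.ofReal (1 - p) = 1 := by
  rw [← ENNReal.ofReal_add hp.1 (by linarith [hp.2])]
  norm_num

theorem bern_prob {p : ℝ} (hp : p ∈ Set.Icc (0:ℝ) 1) : IsProbabilityMeasure (bern p) := by
  constructor
  simp only [bern, Measure.add_apply, Measure.smul_apply, smul_eq_mul, measure_univ, mul_one]
  exact aux_ofReal_add hp

theorem bstate_prob {T : ℕ} {μ : Fin T → ℝ} {t : Fin T} (hp : μ t ∈ Set.Icc (0:ℝ) 1) :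
    IsProbabilityMeasure (bstate μ t) := by
  constructor
  simp only [bstate, Measure.add_apply, Measure.smul_apply, smul_eq_mul, measure_univ, mul_one]
  exact aux_ofReal_add hp

theorem bern_singleton {p : ℝ} (hp : p ∈ Set.Icc (0:ℝ) 1) (b : Bool) :
    ((bern p) {b}).toReal = if b then p else 1 - p := by
  cases b <;>
    simp [bern, Measure.add_apply, Measure.smul_apply, Measure.dirac_apply,
      ENNReal.toReal_ofReal, hp.1, sub_nonneg.2 hp.2]

theorem map_bern {T : ℕ} (μ : Fin T → ℝ) (t : Fin T) :
    Measure.map (fun b : Bool => if b then (1:ℝ) else 0) (bern (μ t)) = bstate μ t := by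
  rw [bern, bstate, Measure.map_add _ _ measurable_from_top, Measure.map_smul,
    Measure.map_smul, Measure.map_dirac' measurable_from_top,
    Measure.map_dirac' measurable_from_top]
  simp

theorem integral_bern {p : ℝ} (hp : p ∈ Set.Icc (0:ℝ) 1) (f : Bool → ℝ) :
    ∫ b, f b ∂(bern p) = p * f true + (1 - p) * f false := by
  haveI : IsProbabilityMeasure (bern p) := bern_prob hp
  rw [integral_fintype (Integrable.of_finite)]
  rw [Fintype.sum_bool]
  rw [measureReal_def, measureReal_def, bern_singleton hp true, bern_singleton hp false]
  simp

theorem stateMean_bstate {T : ℕ} {μ : Fin T → ℝ} (t : Fin T) (hp : μ t ∈ Set.Icc (0:ℝ) 1) :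
    stateMean (bstate μ) t = μ t := by
  rw [stateMean, ← map_bern μ t,
    integral_map measurable_from_top.aemeasurable
      (f := fun x : ℝ => x) measurable_id.aestronglyMeasurable,
    integral_bern hp]
  simp

theorem bstate_Icc {T : ℕ} {μ : Fin T → ℝ} (t : Fin T) (hp : μ t ∈ Set.Icc (0:ℝ) 1) :
    bstate μ t (Set.Icc (0:ℝ) 1) = 1 := by
  haveI : IsProbabilityMeasure (bern (μ t)) := bern_prob hp
  rw [← map_bern μ t, Measure.map_apply measurable_from_top measurableSet_Icc]
  have : (fun b : Bool => if b then (1:ℝ) else 0) ⁻¹' Set.Icc (0:ℝ) 1 = Set.univ := by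
    ext b; cases b <;> simp
  rw [this, measure_univ]

section Main
variable {ι : Type*} [Fintype ι] [DecidableEq ι] {T : ℕ}

theorem integral_coarsen (τ : ι → Fin T) (δb : (ι → Bool) → Fin T → ℝ)
    (s : Fin T → Measure ℝ) (hp : ∀ t, IsProbabilityMeasure (s t))
    (hi : ∀ t, s t (Set.Icc (0:ℝ) 1) = 1) (t : Fin T) :
    ∫ w, coarsen δb w t ∂(Measure.pi fun i => s (τ i)) = binExp τ δb (stateMean s) t := by
  haveI := hp
  have hid : ∀ i : ι, Integrable (fun x : ℝ => x) (s (τ i)) :=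
    fun i => aux_integrable_id _ (hi (τ i))
  have hg : ∀ (b : ι → Bool) (i : ι),
      Integrable (fun x : ℝ => if b i then x else 1 - x) (s (τ i)) := by
    intro b i
    cases hbi : b i
    · simpa only [hbi, Bool.false_eq_true, if_false, Pi.sub_def] using (integrable_const 1).sub (hid i)
    · simpa only [hbi, if_true] using hid i
  have hterm : ∀ b : ι → Bool,
      Integrable (fun w : ι → ℝ => (∏ i, if b i then w i else 1 - w i) * δb b t)
        (Measure.pi fun i => s (τ i)) := fun b =>
    (aux_integrable_pi_prod (fun i => s (τ i)) (f := fun i x => if b i then x else 1 - x)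
      (hg b)).mul_const _
  unfold coarsen binExp
  rw [integral_finset_sum _ (fun b _ => hterm b)]
  refine Finset.sum_congr rfl fun b _ => ?_
  rw [integral_mul_const]
  congr 1
  have hfac : ∫ w, (∏ i, if b i then w i else 1 - w i) ∂(Measure.pi fun i => s (τ i)) =
      ∏ i, ∫ x, (if b i then x else 1 - x) ∂(s (τ i)) :=
    aux_integral_pi_prod (fun i => s (τ i)) (fun i x => if b i then x else 1 - x)
  rw [hfac]
  refine Finset.prod_congr rfl fun i _ => ?_
  cases hbi : b i
  · simp only [hbi, Bool.false_eq_true, if_false]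
    rw [integral_sub (integrable_const 1) (hid i)]
    simp [stateMean, measure_univ]
  · simp only [hbi, if_true]
    rfl

theorem integral_pi_bstate (τ : ι → Fin T) (μ : Fin T → ℝ)
    (hμ : ∀ t, μ t ∈ Set.Icc (0:ℝ) 1) (g : (ι → ℝ) → ℝ) (hg : Measurable g) :
    ∫ w, g w ∂(Measure.pi fun i => bstate μ (τ i)) =
      ∑ b : ι → Bool, (∏ i, if b i then μ (τ i) else 1 - μ (τ i)) *
        g (fun i => if b i then 1 else 0) := by
  haveI : ∀ i : ι, IsProbabilityMeasure (bern (μ (τ i))) := fun i => bern_prob (hμ (τ i))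
  haveI : ∀ t, IsProbabilityMeasure (bstate μ t) := fun t => bstate_prob (hμ t)
  have hmp : MeasurePreserving (fun (x : ι → Bool) (i : ι) => if x i then (1:ℝ) else 0)
      (Measure.pi fun i => bern (μ (τ i))) (Measure.pi fun i => bstate μ (τ i)) :=
    measurePreserving_pi _ _ (fun i => ⟨measurable_from_top, map_bern μ (τ i)⟩)
  rw [← hmp.map_eq, integral_map hmp.measurable.aemeasurable hg.aestronglyMeasurable]
  rw [integral_fintype Integrable.of_finite]
  refine Finset.sum_congr rfl fun b _ => ?_
  have h1 : (Measure.pi fun i => bern (μ (τ i))) {b} = ∏ i, bern (μ (τ i)) {b i} := by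
    rw [← Set.univ_pi_singleton b, Measure.pi_pi]
  rw [measureReal_def, h1, smul_eq_mul, ENNReal.toReal_prod]
  congr 1
  refine Finset.prod_congr rfl fun i _ => ?_
  rw [bern_singleton (hμ (τ i))]

end Main

section Main2
variable {ι : Type*} [Fintype ι] [DecidableEq ι] {T : ℕ}

theorem bstate_isState {M : Set (Fin T → ℝ)} {μ : Fin T → ℝ} (hμM : μ ∈ M)
    (hμ : ∀ t, μ t ∈ Set.Icc (0:ℝ) 1) : IsState M (bstate μ) := by
  have hsm : stateMean (bstate μ) = μ := funext fun t => stateMean_bstate t (hμ t)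
  exact ⟨fun t => bstate_prob (hμ t), fun t => bstate_Icc t (hμ t), by rw [hsm]; exact hμM⟩

theorem contRegret_coarsen {M : Set (Fin T → ℝ)} (τ : ι → Fin T)
    (δb : (ι → Bool) → Fin T → ℝ) (s : Fin T → Measure ℝ) (hs : IsState M s) :
    contRegret τ (coarsen δb) s = binRegret τ δb (stateMean s) := by
  unfold contRegret binRegret
  congr 1
  refine Finset.sum_congr rfl fun t _ => ?_
  rw [integral_coarsen τ δb s hs.1 hs.2.1 t]

theorem contRegret_bstate (τ : ι → Fin T) (δ' : (ι → ℝ) → Fin T → ℝ)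
    (hδ' : ∀ t, Measurable fun w => δ' w t) (μ : Fin T → ℝ)
    (hμ : ∀ t, μ t ∈ Set.Icc (0:ℝ) 1) :
    contRegret τ δ' (bstate μ) =
      binRegret τ (fun b t => δ' (fun i => if b i then 1 else 0) t) μ := by
  have hsm : stateMean (bstate μ) = μ := funext fun t => stateMean_bstate t (hμ t)
  unfold contRegret binRegret binExp
  rw [hsm]
  congr 1
  refine Finset.sum_congr rfl fun t _ => ?_
  congr 1
  exact integral_pi_bstate τ μ hμ (fun w => δ' w t) (hδ' t)

theorem binExp_nonneg (τ : ι → Fin T) {δb : (ι → Bool) → Fin T → ℝ}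
    (hδ : ∀ b t, 0 ≤ δb b t) {μ : Fin T → ℝ} (hμ : ∀ t, μ t ∈ Set.Icc (0:ℝ) 1) (t : Fin T) :
    0 ≤ binExp τ δb μ t := by
  refine Finset.sum_nonneg fun b _ => mul_nonneg (Finset.prod_nonneg fun i _ => ?_) (hδ b t)
  cases hbi : b i
  · simp only [Bool.false_eq_true, if_false]
    linarith [(hμ (τ i)).2]
  · simp only [if_true]
    exact (hμ (τ i)).1

theorem sum_binExp (τ : ι → Fin T) {δb : (ι → Bool) → Fin T → ℝ} (hδ : IsRuleB δb)
    {μ : Fin T → ℝ} : ∑ t, binExp τ δb μ t = 1 := by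
  unfold binExp
  rw [Finset.sum_comm]
  have h1 : ∀ b : ι → Bool,
      ∑ t, (∏ i, if b i then μ (τ i) else 1 - μ (τ i)) * δb b t
        = ∏ i, (if b i then μ (τ i) else 1 - μ (τ i)) := by
    intro b; rw [← Finset.mul_sum, hδ.2 b, mul_one]
  rw [Finset.sum_congr rfl fun b _ => h1 b]
  have h2 : ∀ i : ι, ∑ x : Bool, (if x then μ (τ i) else 1 - μ (τ i)) = 1 := by
    intro i; rw [Fintype.sum_bool]; simp
  calc ∑ b : ι → Bool, ∏ i, (if b i then μ (τ i) else 1 - μ (τ i))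
      = ∏ i : ι, ∑ x : Bool, (if x then μ (τ i) else 1 - μ (τ i)) := by
        rw [Finset.prod_univ_sum, Fintype.piFinset_univ]
    _ = 1 := by rw [Finset.prod_congr rfl fun i _ => h2 i, Finset.prod_const_one]

theorem binRegret_nonneg (hT : 0 < T) (τ : ι → Fin T) {δb : (ι → Bool) → Fin T → ℝ}
    (hδ : IsRuleB δb) {μ : Fin T → ℝ} (hμ : ∀ t, μ t ∈ Set.Icc (0:ℝ) 1) :
    0 ≤ binRegret τ δb μ := by
  haveI : Nonempty (Fin T) := ⟨⟨0, hT⟩⟩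
  unfold binRegret
  rw [sub_nonneg]
  calc ∑ t, μ t * binExp τ δb μ t
      ≤ ∑ t, (⨆ t', μ t') * binExp τ δb μ t := by
        refine Finset.sum_le_sum fun t _ => ?_
        exact mul_le_mul_of_nonneg_right
          (le_ciSup (Set.Finite.bddAbove (Set.finite_range μ)) t)
          (binExp_nonneg τ hδ.1 hμ t)
    _ = (⨆ t', μ t') := by rw [← Finset.mul_sum, sum_binExp τ hδ, mul_one]

end Main2

section Main3
variable {ι : Type*} [Fintype ι] [DecidableEq ι] {T : ℕ}

theorem contRegret_le_one (hT : 0 < T) (τ : ι → Fin T) {M : Set (Fin T → ℝ)}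
    (hM : ∀ μ ∈ M, ∀ t, μ t ∈ Set.Icc (0:ℝ) 1)
    {δ' : (ι → ℝ) → Fin T → ℝ} (hδ' : IsRuleC δ') {s : Fin T → Measure ℝ}
    (hs : IsState M s) : contRegret τ δ' s ≤ 1 := by
  haveI : Nonempty (Fin T) := ⟨⟨0, hT⟩⟩
  unfold contRegret
  have h1 : (⨆ t, stateMean s t) ≤ 1 := ciSup_le fun t => (hM _ hs.2.2 t).2
  have h2 : 0 ≤ ∑ t, stateMean s t * ∫ w, δ' w t ∂(Measure.pi fun i => s (τ i)) :=
    Finset.sum_nonneg fun t _ => mul_nonneg (hM _ hs.2.2 t).1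
      (integral_nonneg fun w => hδ'.2.1 w t)
  linarith

end Main3

/-- if `δb` is an `ε`-approximate minimax regret rule for the binary-outcome
problem with mean restriction `M`, then its coarsening is an `ε`-approximate minimax regret
rule for the `[0,1]`-outcome problem with the same mean restriction. -/
theorem stmt17 {ι : Type*} [Fintype ι] [DecidableEq ι] {T : ℕ} (hT : 0 < T)
    (τ : ι → Fin T) (M : Set (Fin T → ℝ)) (hMne : M.Nonempty)
    (hM : ∀ μ ∈ M, ∀ t, μ t ∈ Set.Icc (0:ℝ) 1)
    (ε : ℝ) (hε : 0 < ε)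
    (δb : (ι → Bool) → Fin T → ℝ) (hδb : IsRuleB δb)
    (happrox : sSup ((fun μ => binRegret τ δb μ) '' M) ≤
      (⨅ δb' : {d : (ι → Bool) → Fin T → ℝ // IsRuleB d},
        sSup ((fun μ => binRegret τ δb'.1 μ) '' M)) + ε) :
    sSup ((fun s => contRegret τ (coarsen δb) s) '' {s | IsState M s}) ≤
      (⨅ δ' : {d : (ι → ℝ) → Fin T → ℝ // IsRuleC d},
        sSup ((fun s => contRegret τ δ'.1 s) '' {s | IsState M s})) + ε := by
  classical
  haveI : Nonempty (Fin T) := ⟨⟨0, hT⟩⟩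
  -- nonempty rule spaces
  have t0 : Fin T := ⟨0, hT⟩
  haveI hCne : Nonempty {d : (ι → ℝ) → Fin T → ℝ // IsRuleC d} := by
    refine ⟨⟨fun _ t => if t = t0 then 1 else 0, fun t => measurable_const,
      fun w t => by positivity, fun w => ?_⟩⟩
    simp
  -- step 1: the two images coincide
  have hAB : ((fun s => contRegret τ (coarsen δb) s) '' {s | IsState M s}) =
      ((fun μ => binRegret τ δb μ) '' M) := by
    ext x
    constructor
    · rintro ⟨s, hs, rfl⟩
      exact ⟨stateMean s, hs.2.2, (contRegret_coarsen τ δb s hs).symm⟩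
    · rintro ⟨μ, hμ, rfl⟩
      have hμI : ∀ t, μ t ∈ Set.Icc (0:ℝ) 1 := hM μ hμ
      refine ⟨bstate μ, bstate_isState hμ hμI, ?_⟩
      show contRegret τ (coarsen δb) (bstate μ) = binRegret τ δb μ
      rw [contRegret_coarsen τ δb _ (bstate_isState hμ hμI)]
      congr 1
      exact funext fun t => stateMean_bstate t (hμI t)
  rw [hAB]
  refine happrox.trans (add_le_add_left ?_ ε)
  -- step 2: inf over binary rules ≤ inf over continuous rules
  refine le_ciInf fun δ' => ?_
  set δrb : (ι → Bool) → Fin T → ℝ := fun b t => δ'.1 (fun i => if b i then 1 else 0) t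
    with hδrb
  have hrb : IsRuleB δrb := ⟨fun b t => δ'.2.2.1 _ t, fun b => δ'.2.2.2 _⟩
  have hbdd : BddBelow (Set.range fun δb' : {d : (ι → Bool) → Fin T → ℝ // IsRuleB d} =>
      sSup ((fun μ => binRegret τ δb'.1 μ) '' M)) := by
    refine ⟨0, ?_⟩
    rintro x ⟨d, rfl⟩
    refine Real.sSup_nonneg fun y hy => ?_
    obtain ⟨μ, hμ, rfl⟩ := hy
    exact binRegret_nonneg hT τ d.2 (hM μ hμ)
  refine ciInf_le_of_le hbdd ⟨δrb, hrb⟩ ?_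
  refine csSup_le_csSup ?_ (hMne.image _) ?_
  · refine ⟨1, ?_⟩
    rintro x ⟨s, hs, rfl⟩
    exact contRegret_le_one hT τ hM δ'.2 hs
  · rintro x ⟨μ, hμ, rfl⟩
    have hμI : ∀ t, μ t ∈ Set.Icc (0:ℝ) 1 := hM μ hμ
    refine ⟨bstate μ, bstate_isState hμ hμI, ?_⟩
    show contRegret τ δ'.1 (bstate μ) = binRegret τ δrb μ
    rw [hδrb]
    exact contRegret_bstate τ δ'.1 δ'.2.1 μ hμI
end
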